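/- Let 0 < a < 1 and b > 0, and define the weight v on ℝ by v(x) = 1/(|x|^a (log(e/|x|))^b) for |x| ≤ 1 and v(x) = 1 for |x| > 1. Then v ∈ A_1, i.e., there is a constant C such that ⨍_I v dx ≤ C ess inf_{x ∈ I} v(x) for every interval I ⊂ ℝ. -/

import Mathlib

open MeasureTheory ENNReal

noncomputable section

/-- A (nondegenerate, compact) interval in `ℝ`. -/
def IsIntervalR (I : Set ℝ) : Prop := ∃ (c h : ℝ), 0 < h ∧ I = Set.Icc c (c + h)

/-- The average `⨍_I f dx` of a (nonnegative) function over a set,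
computed with the Lebesgue integral, valued in `ℝ≥0∞`. -/
def avgI (I : Set ℝ) (f : ℝ → ℝ) : ℝ≥0∞ :=
  (volume I)⁻¹ * ∫⁻ x in I, ENNReal.ofReal (f x)

/-- The Muckenhoupt class `A_p` on `ℝ` for `1 < p < ∞`. -/
def MuckApI (p : ℝ) (w : ℝ → ℝ) : Prop :=
  ∃ C : ℝ≥0∞, C ≠ ⊤ ∧ ∀ I : Set ℝ, IsIntervalR I →
    avgI I w * (avgI I fun x => w x ^ (1 - p / (p - 1))) ^ (p - 1) ≤ C

/-- The reverse Hölder class `RH_s` on `ℝ` for `1 < s < ∞`. -/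
def RevHolderI (s : ℝ) (w : ℝ → ℝ) : Prop :=
  ∃ C : ℝ≥0∞, C ≠ ⊤ ∧ ∀ I : Set ℝ, IsIntervalR I →
    (avgI I fun x => w x ^ s) ^ (1 / s) ≤ C * avgI I w

namespace A1Aux

/-- Antitonicity of `t ↦ t ^ (-b)`. -/
lemma rpow_neg_anti {x y b : ℝ} (hx : 0 < x) (hxy : x ≤ y) (hb : 0 ≤ b) :
    y ^ (-b) ≤ x ^ (-b) := by
  rw [Real.rpow_neg (le_trans hx.le hxy), Real.rpow_neg hx.le]
  exact inv_anti₀ (Real.rpow_pos_of_pos hx _) (Real.rpow_le_rpow hx.le hxy hb)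

/-- `(1+s)^b ≤ K e^{a s}` with `K = (min 1 (a/b))^(-b)`. -/
lemma one_add_rpow_le {a b : ℝ} (ha : 0 < a) (hb : 0 < b) {s : ℝ} (hs : 0 ≤ s) :
    (1 + s) ^ b ≤ (min 1 (a / b)) ^ (-b) * Real.exp (a * s) := by
  set t := min 1 (a / b) with ht
  have ht0 : 0 < t := lt_min one_pos (div_pos ha hb)
  have ht1 : t ≤ 1 := min_le_left _ _
  have htb : t * b ≤ a := by
    have h2 : t ≤ a / b := min_le_right _ _
    calc t * b ≤ (a / b) * b := by nlinarith
      _ = a := by field_simp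
  have h1 : 1 + s ≤ t⁻¹ * Real.exp (t * s) := by
    have hexp := Real.add_one_le_exp (t * s)
    rw [le_inv_mul_iff₀ ht0]
    nlinarith
  have h2 : (1 + s) ^ b ≤ (t⁻¹ * Real.exp (t * s)) ^ b :=
    Real.rpow_le_rpow (by linarith) h1 hb.le
  have h3 : (t⁻¹ * Real.exp (t * s)) ^ b = t ^ (-b) * Real.exp (t * s * b) := by
    rw [Real.mul_rpow (inv_nonneg.2 ht0.le) (Real.exp_nonneg _), Real.inv_rpow ht0.le,
      ← Real.rpow_neg ht0.le, ← Real.exp_mul]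
  have h4 : Real.exp (t * s * b) ≤ Real.exp (a * s) := by
    apply Real.exp_le_exp.2; nlinarith
  have hK0 : 0 ≤ t ^ (-b) := Real.rpow_nonneg ht0.le _
  calc (1 + s) ^ b ≤ (t⁻¹ * Real.exp (t * s)) ^ b := h2
    _ = t ^ (-b) * Real.exp (t * s * b) := h3
    _ ≤ t ^ (-b) * Real.exp (a * s) := by nlinarith

/-- Quasi-monotonicity: for `0 < x ≤ M ≤ 1`,
`x^a (1 - log x)^b ≤ K · M^a (1 - log M)^b`. -/
lemma G_quasi_anti {a b : ℝ} (ha : 0 < a) (hb : 0 < b) {x M : ℝ}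
    (hx : 0 < x) (hxM : x ≤ M) (hM : M ≤ 1) :
    x ^ a * (1 - Real.log x) ^ b ≤
      (min 1 (a / b)) ^ (-b) * (M ^ a * (1 - Real.log M) ^ b) := by
  have hM0 : 0 < M := lt_of_lt_of_le hx hxM
  set K : ℝ := (min 1 (a / b)) ^ (-b) with hK
  set s : ℝ := Real.log M - Real.log x with hs
  have hs0 : 0 ≤ s := sub_nonneg.2 (Real.log_le_log hx hxM)
  set ℓ : ℝ := 1 - Real.log M with hℓ
  have hℓ1 : 1 ≤ ℓ := by
    have := Real.log_nonpos hM0.le hM; simp only [hℓ]; linarith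
  have hxe : 1 - Real.log x = ℓ + s := by simp only [hℓ, hs]; ring
  have key : (ℓ + s) ^ b ≤ ℓ ^ b * (K * Real.exp (a * s)) := by
    have h1 : ℓ + s ≤ ℓ * (1 + s) := by nlinarith
    have h2 : (ℓ + s) ^ b ≤ (ℓ * (1 + s)) ^ b :=
      Real.rpow_le_rpow (by linarith) h1 hb.le
    have h3 : (ℓ * (1 + s)) ^ b = ℓ ^ b * (1 + s) ^ b :=
      Real.mul_rpow (by linarith) (by linarith)
    have h4 := one_add_rpow_le ha hb hs0
    have h5 : 0 ≤ ℓ ^ b := Real.rpow_nonneg (by linarith) _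
    calc (ℓ + s) ^ b ≤ (ℓ * (1 + s)) ^ b := h2
      _ = ℓ ^ b * (1 + s) ^ b := h3
      _ ≤ ℓ ^ b * (K * Real.exp (a * s)) := by nlinarith
  have hxa : x ^ a * Real.exp (a * s) = M ^ a := by
    rw [Real.rpow_def_of_pos hx, Real.rpow_def_of_pos hM0, ← Real.exp_add]
    congr 1; simp only [hs]; ring
  have hxa0 : 0 ≤ x ^ a := Real.rpow_nonneg hx.le _
  calc x ^ a * (1 - Real.log x) ^ b = x ^ a * (ℓ + s) ^ b := by rw [hxe]
    _ ≤ x ^ a * (ℓ ^ b * (K * Real.exp (a * s))) := by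
        apply mul_le_mul_of_nonneg_left key hxa0
    _ = K * ℓ ^ b * (x ^ a * Real.exp (a * s)) := by ring
    _ = K * (M ^ a * ℓ ^ b) := by rw [hxa]; ring

/-- `G` is bounded by `K` on `(0,1]`. -/
lemma G_le_K {a b : ℝ} (ha : 0 < a) (hb : 0 < b) {x : ℝ} (hx : 0 < x) (hx1 : x ≤ 1) :
    x ^ a * (1 - Real.log x) ^ b ≤ (min 1 (a / b)) ^ (-b) := by
  have := G_quasi_anti ha hb hx hx1 le_rfl
  simpa [Real.log_one, Real.one_rpow] using this

/-- Doubling: for `M/2 ≤ y ≤ M ≤ 1`, `G M ≤ 2^a · G y`. -/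
lemma G_doubling {a b : ℝ} (ha : 0 < a) (hb : 0 < b) {y M : ℝ}
    (hM0 : 0 < M) (h2 : M ≤ 2 * y) (hyM : y ≤ M) (hM : M ≤ 1) :
    M ^ a * (1 - Real.log M) ^ b ≤ 2 ^ a * (y ^ a * (1 - Real.log y) ^ b) := by
  have hy0 : 0 < y := by linarith
  have h1 : M ^ a ≤ 2 ^ a * y ^ a := by
    calc M ^ a ≤ (2 * y) ^ a := Real.rpow_le_rpow hM0.le h2 ha.le
      _ = 2 ^ a * y ^ a := Real.mul_rpow (by norm_num) hy0.le
  have h2' : (1 - Real.log M) ^ b ≤ (1 - Real.log y) ^ b := by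
    apply Real.rpow_le_rpow
    · have := Real.log_nonpos hM0.le hM; linarith
    · have := Real.log_le_log hy0 hyM; linarith
    · exact hb.le
  have h3 : 0 ≤ (1 - Real.log M) ^ b := Real.rpow_nonneg (by
    have := Real.log_nonpos hM0.le hM; linarith) _
  have h4 : 0 ≤ M ^ a := Real.rpow_nonneg hM0.le _
  have h5 : 0 ≤ 2 ^ a * y ^ a := mul_nonneg (Real.rpow_nonneg (by norm_num) _)
    (Real.rpow_nonneg hy0.le _)
  calc M ^ a * (1 - Real.log M) ^ b ≤ (2 ^ a * y ^ a) * (1 - Real.log y) ^ b := by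
        apply mul_le_mul h1 h2' h3 h5
    _ = 2 ^ a * (y ^ a * (1 - Real.log y) ^ b) := by ring

lemma G_pos {a b : ℝ} {x : ℝ} (hx : 0 < x) (hx1 : x ≤ 1) :
    0 < x ^ a * (1 - Real.log x) ^ b := by
  have h1 : 0 < 1 - Real.log x := by have := Real.log_nonpos hx.le hx1; linarith
  exact mul_pos (Real.rpow_pos_of_pos hx _) (Real.rpow_pos_of_pos h1 _)

/-- Two-sided integral of `|x|^(-a)` over `[-m, m]`. -/
lemma lintegral_abs_rpow {a : ℝ} (ha0 : 0 < a) (ha1 : a < 1) {m : ℝ} (hm : 0 < m) :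
    ∫⁻ x in Set.Icc (-m) m, ENNReal.ofReal (|x| ^ (-a)) =
      ENNReal.ofReal (2 * (m ^ (1 - a) / (1 - a))) := by
  have hra : (-1 : ℝ) < -a := by linarith
  set F : ℝ → ℝ := fun x => |x| ^ (-a) with hF
  have hFeq : Set.EqOn (fun x : ℝ => x ^ (-a)) F (Set.uIcc 0 m) := by
    intro x hx
    rw [Set.uIcc_of_le hm.le] at hx
    simp only [hF, abs_of_nonneg hx.1]
  have hi1 : IntervalIntegrable F volume 0 m := by
    apply (intervalIntegral.intervalIntegrable_rpow' hra (a := 0) (b := m)).congr_ae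
    filter_upwards [ae_restrict_mem measurableSet_uIoc] with x hx
    rw [Set.uIoc_of_le hm.le] at hx
    simp only [hF, abs_of_pos hx.1]
  have hi2 : IntervalIntegrable F volume (-m) 0 := by
    have := ((IntervalIntegrable.iff_comp_neg (f := F) (a := m) (b := 0)).mp hi1.symm)
    simp only [neg_zero, neg_neg] at this
    apply this.congr_ae
    filter_upwards with x
    simp [hF, abs_neg]
  have hi3 : IntervalIntegrable F volume (-m) m := hi2.trans hi1
  have hval1 : (∫ x in (0:ℝ)..m, F x) = m ^ (1 - a) / (1 - a) := by
    rw [intervalIntegral.integral_congr hFeq.symm, integral_rpow (Or.inl hra),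
      Real.zero_rpow (by linarith : -a + 1 ≠ 0)]
    norm_num
    rw [show -a + 1 = 1 - a by ring]
  have hval2 : (∫ x in (-m)..(0:ℝ), F x) = ∫ x in (0:ℝ)..m, F x := by
    have h1 : (∫ x in (-m)..(0:ℝ), F x) = ∫ x in (-m)..(0:ℝ), F (-x) := by
      apply intervalIntegral.integral_congr
      intro x _; simp [hF, abs_neg]
    rw [h1, intervalIntegral.integral_comp_neg]
    norm_num
  have hval : (∫ x in (-m)..m, F x) = 2 * (m ^ (1 - a) / (1 - a)) := by
    rw [← intervalIntegral.integral_add_adjacent_intervals hi2 hi1, hval1, hval2, hval1]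
    ring
  have hIoc : IntegrableOn F (Set.Ioc (-m) m) volume :=
    (intervalIntegrable_iff_integrableOn_Ioc_of_le (by linarith)).mp hi3
  have hnn : 0 ≤ᵐ[volume.restrict (Set.Ioc (-m) m)] F :=
    Filter.Eventually.of_forall fun x => Real.rpow_nonneg (abs_nonneg x) _
  calc ∫⁻ x in Set.Icc (-m) m, ENNReal.ofReal (F x)
      = ∫⁻ x in Set.Ioc (-m) m, ENNReal.ofReal (F x) := by
        rw [MeasureTheory.Measure.restrict_congr_set MeasureTheory.Ioc_ae_eq_Icc]
    _ = ENNReal.ofReal (∫ x in Set.Ioc (-m) m, F x) :=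
        (MeasureTheory.ofReal_integral_eq_lintegral_ofReal hIoc hnn).symm
    _ = ENNReal.ofReal (2 * (m ^ (1 - a) / (1 - a))) := by
        rw [← intervalIntegral.integral_of_le (by linarith : -m ≤ m), hval]

end A1Aux

set_option maxHeartbeats 1000000 in
open A1Aux in
/-- The weight `v(x) = 1/(|x|^a (log(e/|x|))^b)` on `[-1,1]`, extended by `1`, belongs
to `A₁`: `⨍_I v ≤ C essinf_I v` for every interval `I`. -/
theorem log_power_weight_in_A1 (a b : ℝ) (ha0 : 0 < a) (ha1 : a < 1) (hb : 0 < b)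
    (v : ℝ → ℝ)
    (hv : ∀ x, v x = if |x| ≤ 1 then
      1 / (|x| ^ a * Real.log (Real.exp 1 / |x|) ^ b) else 1) :
    ∃ C : ℝ≥0∞, C ≠ ⊤ ∧ ∀ I : Set ℝ, IsIntervalR I →
      avgI I v ≤ C * essInf (fun x => ENNReal.ofReal (v x)) (volume.restrict I) := by
  have h1a : (0:ℝ) < 1 - a := by linarith
  have hlogd : ∀ t : ℝ, t ≠ 0 → Real.log (Real.exp 1 / |t|) = 1 - Real.log |t| := by
    intro t ht
    rw [Real.log_div (Real.exp_ne_zero 1) (abs_ne_zero.mpr ht), Real.log_exp]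
  have hv_nn : ∀ x, 0 ≤ v x := by
    intro x; rw [hv]; split
    · apply div_nonneg zero_le_one
      apply mul_nonneg (Real.rpow_nonneg (abs_nonneg x) _)
      apply Real.rpow_nonneg
      rcases eq_or_ne x 0 with rfl | hx0
      · simp
      · apply Real.log_nonneg
        rw [le_div_iff₀ (abs_pos.mpr hx0)]
        have := Real.add_one_le_exp (1:ℝ)
        have hx1 : |x| ≤ 1 := by assumption
        nlinarith
    · norm_num
  set K : ℝ := (min 1 (a / b)) ^ (-b) with hKdef
  have htmin : 0 < min 1 (a / b) := lt_min one_pos (div_pos ha0 hb)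
  have hK0 : 0 < K := Real.rpow_pos_of_pos htmin _
  have hK1 : 1 ≤ K :=
    Real.one_le_rpow_of_pos_of_le_one_of_nonpos htmin (min_le_left _ _) (by linarith)
  have h2a0 : (0:ℝ) ≤ 2 ^ a := Real.rpow_nonneg (by norm_num) _
  have h2a1 : (1:ℝ) ≤ 2 ^ a := Real.one_le_rpow one_le_two ha0.le
  set C1 : ℝ := 4 / (1 - a) + K + 2 ^ a + 1 with hC1def
  have hC10 : 0 ≤ C1 := by
    have h4 : 0 < 4 / (1 - a) := by positivity
    simp only [hC1def]; linarith
  refine ⟨ENNReal.ofReal (C1 * K), ENNReal.ofReal_ne_top, ?_⟩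
  rintro I ⟨c, h, hh, rfl⟩
  set M : ℝ := max |c| |c + h| with hMdef
  have habs : ∀ x ∈ Set.Icc c (c + h), |x| ≤ M := fun x hx =>
    abs_le_max_abs_abs hx.1 hx.2
  have hM0 : 0 < M := by
    have h1 : |(c + h) + (-c)| ≤ |c + h| + |(-c)| := abs_add_le _ _
    rw [abs_neg] at h1
    have h2 : |(c + h) + -c| = h := by
      rw [show (c + h) + -c = h by ring]; exact abs_of_pos hh
    have h3 : |c| ≤ M := le_max_left _ _
    have h4 : |c + h| ≤ M := le_max_right _ _
    linarith
  have hMM : |M| = M := abs_of_pos hM0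
  have habs2 : ∀ x ∈ Set.Icc c (c + h), M - h ≤ |x| := by
    intro x hx
    have h1 : |c| - |x| ≤ |c - x| := abs_sub_abs_le_abs_sub c x
    have h2 : |c + h| - |x| ≤ |c + h - x| := abs_sub_abs_le_abs_sub (c + h) x
    have h3 : |c - x| = x - c := by
      rw [abs_sub_comm, abs_of_nonneg (by linarith [hx.1])]
    have h4 : |c + h - x| = c + h - x := abs_of_nonneg (by linarith [hx.2])
    have h5 : M ≤ |x| + h := by
      apply max_le
      · rw [h3] at h1; linarith [hx.1, hx.2]
      · rw [h4] at h2; linarith [hx.1, hx.2]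
    linarith
  have hvM_le : M ≤ 1 → v M = (M ^ a * (1 - Real.log M) ^ b)⁻¹ := by
    intro hM1
    rw [hv M, hlogd M hM0.ne', hMM, if_pos hM1, one_div]
  have hvM_gt : ¬ M ≤ 1 → v M = 1 := by
    intro hM1; rw [hv M, hMM, if_neg hM1]
  have hvM0 : 0 ≤ v M := hv_nn M
  -- pointwise comparison with the essential infimum
  have P1 : ∀ x : ℝ, x ≠ 0 → |x| ≤ M → v M ≤ K * v x := by
    intro x hx0 hxM
    have hax : 0 < |x| := abs_pos.mpr hx0
    rw [hv x, hlogd x hx0]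
    by_cases hM1 : M ≤ 1
    · have hx1 : |x| ≤ 1 := le_trans hxM hM1
      rw [if_pos hx1, hvM_le hM1]
      have hA : 0 < |x| ^ a * (1 - Real.log |x|) ^ b := G_pos hax hx1
      have hB : 0 < M ^ a * (1 - Real.log M) ^ b := G_pos hM0 hM1
      have hG := G_quasi_anti ha0 hb hax hxM hM1
      rw [← one_div, mul_one_div, div_le_div_iff₀ hB hA]
      nlinarith
    · rw [hvM_gt hM1]
      by_cases hx1 : |x| ≤ 1
      · rw [if_pos hx1]
        have hA : 0 < |x| ^ a * (1 - Real.log |x|) ^ b := G_pos hax hx1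
        have hGK := G_le_K ha0 hb hax hx1
        rw [mul_one_div, le_div_iff₀ hA, one_mul]
        exact hGK
      · rw [if_neg hx1]; linarith
  have hvMlb : 1 ≤ K * v M := by
    by_cases hM1 : M ≤ 1
    · rw [hvM_le hM1]
      have hB : 0 < M ^ a * (1 - Real.log M) ^ b := G_pos hM0 hM1
      have hGK := G_le_K ha0 hb hM0 hM1
      calc (1:ℝ) = (M ^ a * (1 - Real.log M) ^ b) * (M ^ a * (1 - Real.log M) ^ b)⁻¹ :=
            (mul_inv_cancel₀ hB.ne').symm
        _ ≤ K * (M ^ a * (1 - Real.log M) ^ b)⁻¹ :=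
            mul_le_mul_of_nonneg_right hGK (inv_nonneg.2 hB.le)
    · rw [hvM_gt hM1]; linarith
  -- the main integral estimate
  have key : (∫⁻ x in Set.Icc c (c + h), ENNReal.ofReal (v x)) ≤
      ENNReal.ofReal (C1 * (h * v M)) := by
    by_cases hcase : M ≤ 2 * h
    · -- "near" case : the interval is comparable to [-M, M]
      set mm : ℝ := min M 1 with hmmdef
      have hmm0 : 0 < mm := lt_min hM0 one_pos
      have hmm1 : mm ≤ 1 := min_le_right _ _
      have hlogmm : 0 < 1 - Real.log mm := by
        have := Real.log_nonpos hmm0.le hmm1; linarith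
      set L : ℝ := (1 - Real.log mm) ^ (-b) with hLdef
      have hLnn : 0 ≤ L := Real.rpow_nonneg hlogmm.le _
      have pointwise : ∀ x ∈ Set.Icc c (c + h), v x ≤ L * |x| ^ (-a) + 1 := by
        intro x hx
        have hxM := habs x hx
        rw [hv x]
        by_cases hx1 : |x| ≤ 1
        · rw [if_pos hx1]
          by_cases hx0 : x = 0
          · subst hx0
            simp only [abs_zero]
            rw [Real.zero_rpow ha0.ne', Real.zero_rpow (by linarith : -a ≠ 0)]
            norm_num
          · have hax : 0 < |x| := abs_pos.mpr hx0
            rw [hlogd x hx0]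
            have hxmm : |x| ≤ mm := le_min hxM hx1
            have hlx : 0 < 1 - Real.log |x| := by
              have := Real.log_nonpos (abs_nonneg x) hx1; linarith
            have e1 : (1 - Real.log |x|) ^ (-b) ≤ L := by
              apply rpow_neg_anti hlogmm _ hb.le
              have := Real.log_le_log hax hxmm; linarith
            have keyid : 1 / (|x| ^ a * (1 - Real.log |x|) ^ b) =
                |x| ^ (-a) * (1 - Real.log |x|) ^ (-b) := by
              rw [Real.rpow_neg (abs_nonneg x), Real.rpow_neg hlx.le, one_div, mul_inv]
            rw [keyid]
            have e2 : |x| ^ (-a) * (1 - Real.log |x|) ^ (-b) ≤ |x| ^ (-a) * L :=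
              mul_le_mul_of_nonneg_left e1 (Real.rpow_nonneg (abs_nonneg x) _)
            calc |x| ^ (-a) * (1 - Real.log |x|) ^ (-b) ≤ |x| ^ (-a) * L := e2
              _ = L * |x| ^ (-a) := mul_comm _ _
              _ ≤ L * |x| ^ (-a) + 1 := le_add_of_nonneg_right zero_le_one
        · rw [if_neg hx1]
          have : 0 ≤ L * |x| ^ (-a) :=
            mul_nonneg hLnn (Real.rpow_nonneg (abs_nonneg x) _)
          linarith
      have step1 : (∫⁻ x in Set.Icc c (c + h), ENNReal.ofReal (v x)) ≤
          ∫⁻ x in Set.Icc c (c + h), (ENNReal.ofReal (L * |x| ^ (-a)) + 1) := by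
        apply setLIntegral_mono' measurableSet_Icc
        intro x hx
        calc ENNReal.ofReal (v x) ≤ ENNReal.ofReal (L * |x| ^ (-a) + 1) :=
              ENNReal.ofReal_le_ofReal (pointwise x hx)
          _ ≤ ENNReal.ofReal (L * |x| ^ (-a)) + ENNReal.ofReal 1 := ENNReal.ofReal_add_le
          _ = ENNReal.ofReal (L * |x| ^ (-a)) + 1 := by rw [ENNReal.ofReal_one]
      have step2 : (∫⁻ x in Set.Icc c (c + h), (ENNReal.ofReal (L * |x| ^ (-a)) + 1)) =
          (∫⁻ x in Set.Icc c (c + h), ENNReal.ofReal (L * |x| ^ (-a))) +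
            volume (Set.Icc c (c + h)) := by
        rw [lintegral_add_right _ measurable_const, setLIntegral_one]
      have step3 : (∫⁻ x in Set.Icc c (c + h), ENNReal.ofReal (L * |x| ^ (-a))) ≤
          ENNReal.ofReal L * ENNReal.ofReal (2 * (M ^ (1 - a) / (1 - a))) := by
        have hsub : Set.Icc c (c + h) ⊆ Set.Icc (-M) M := by
          intro x hx; exact abs_le.mp (habs x hx)
        calc (∫⁻ x in Set.Icc c (c + h), ENNReal.ofReal (L * |x| ^ (-a)))
            ≤ ∫⁻ x in Set.Icc (-M) M, ENNReal.ofReal (L * |x| ^ (-a)) :=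
              lintegral_mono_set hsub
          _ = ∫⁻ x in Set.Icc (-M) M, ENNReal.ofReal L * ENNReal.ofReal (|x| ^ (-a)) := by
              simp_rw [ENNReal.ofReal_mul hLnn]
          _ = ENNReal.ofReal L * ∫⁻ x in Set.Icc (-M) M, ENNReal.ofReal (|x| ^ (-a)) :=
              lintegral_const_mul' _ _ ENNReal.ofReal_ne_top
          _ = ENNReal.ofReal L * ENNReal.ofReal (2 * (M ^ (1 - a) / (1 - a))) := by
              rw [lintegral_abs_rpow ha0 ha1 hM0]
      have hvol : volume (Set.Icc c (c + h)) = ENNReal.ofReal h := by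
        rw [Real.volume_Icc]; congr 1; ring
      have realineq : L * (2 * (M ^ (1 - a) / (1 - a))) + h ≤ C1 * (h * v M) := by
        by_cases hM1 : M ≤ 1
        · have hmmM : mm = M := min_eq_left hM1
          have hB : 0 < M ^ a * (1 - Real.log M) ^ b := G_pos hM0 hM1
          have hident : M ^ (1 - a) * L = M * v M := by
            rw [hvM_le hM1, hLdef, hmmM, Real.rpow_sub hM0, Real.rpow_one,
              Real.rpow_neg (by have := Real.log_nonpos hM0.le hM1; linarith : 0 ≤ 1 - Real.log M)]
            have hMa : (0:ℝ) < M ^ a := Real.rpow_pos_of_pos hM0 _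
            have hMb : (0:ℝ) < (1 - Real.log M) ^ b := by
              apply Real.rpow_pos_of_pos
              have := Real.log_nonpos hM0.le hM1; linarith
            field_simp
          have e : L * (2 * (M ^ (1 - a) / (1 - a))) = 2 * (M * v M) / (1 - a) := by
            rw [show L * (2 * (M ^ (1 - a) / (1 - a))) = 2 * (M ^ (1 - a) * L) / (1 - a) by ring,
              hident]
          rw [e]
          have t1 : 2 * (M * v M) / (1 - a) ≤ 4 / (1 - a) * (h * v M) := by
            rw [div_eq_mul_inv, show (4:ℝ) / (1 - a) * (h * v M) = 4 * (h * v M) * (1 - a)⁻¹ by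
              field_simp]
            apply mul_le_mul_of_nonneg_right _ (inv_nonneg.2 h1a.le)
            nlinarith
          have t2 : h ≤ K * (h * v M) := by nlinarith
          have t3 : 0 ≤ (2 ^ a + 1) * (h * v M) := by
            apply mul_nonneg (by linarith) (mul_nonneg hh.le hvM0)
          have expand : C1 * (h * v M) =
              4 / (1 - a) * (h * v M) + K * (h * v M) + (2 ^ a + 1) * (h * v M) := by
            simp only [hC1def]; ring
          linarith
        · have hmm1' : mm = 1 := min_eq_right (le_of_not_ge hM1)
          have hL1 : L = 1 := by
            rw [hLdef, hmm1', Real.log_one, sub_zero, Real.one_rpow]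
          have hvM1 : v M = 1 := hvM_gt hM1
          have hM1' : (1:ℝ) ≤ M := le_of_not_ge hM1
          have hMa : M ^ (1 - a) ≤ M := by
            calc M ^ (1 - a) ≤ M ^ (1:ℝ) :=
                Real.rpow_le_rpow_of_exponent_le hM1' (by linarith)
              _ = M := Real.rpow_one M
          rw [hL1, hvM1, one_mul, mul_one]
          have t1 : 2 * (M ^ (1 - a) / (1 - a)) ≤ 4 / (1 - a) * h := by
            rw [show 2 * (M ^ (1 - a) / (1 - a)) = 2 * M ^ (1 - a) * (1 - a)⁻¹ by ring,
              show (4:ℝ) / (1 - a) * h = 4 * h * (1 - a)⁻¹ by ring]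
            apply mul_le_mul_of_nonneg_right _ (inv_nonneg.2 h1a.le)
            linarith
          have expand : C1 * h = 4 / (1 - a) * h + K * h + 2 ^ a * h + h := by
            simp only [hC1def]; ring
          linarith [t1, mul_nonneg hK0.le hh.le, mul_nonneg h2a0 hh.le]
      calc (∫⁻ x in Set.Icc c (c + h), ENNReal.ofReal (v x))
          ≤ (∫⁻ x in Set.Icc c (c + h), ENNReal.ofReal (L * |x| ^ (-a))) +
              volume (Set.Icc c (c + h)) := le_trans step1 (le_of_eq step2)
        _ ≤ ENNReal.ofReal L * ENNReal.ofReal (2 * (M ^ (1 - a) / (1 - a))) +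
              ENNReal.ofReal h := by
            rw [hvol]; exact add_le_add_left step3 _
        _ = ENNReal.ofReal (L * (2 * (M ^ (1 - a) / (1 - a))) + h) := by
            rw [← ENNReal.ofReal_mul hLnn, ← ENNReal.ofReal_add
              (mul_nonneg hLnn (by positivity)) hh.le]
        _ ≤ ENNReal.ofReal (C1 * (h * v M)) := ENNReal.ofReal_le_ofReal realineq
    · -- "far" case : v is essentially constant on I
      have hfar : 2 * h < M := lt_of_not_ge hcase
      have P2 : ∀ x ∈ Set.Icc c (c + h), v x ≤ 2 ^ a * v M := by
        intro x hx
        have hxM := habs x hx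
        have hxlb := habs2 x hx
        have hx0 : x ≠ 0 := by
          intro h0; rw [h0, abs_zero] at hxlb; linarith
        have hax : 0 < |x| := abs_pos.mpr hx0
        have hx2 : M ≤ 2 * |x| := by linarith
        rw [hv x, hlogd x hx0]
        by_cases hM1 : M ≤ 1
        · have hx1 : |x| ≤ 1 := le_trans hxM hM1
          rw [if_pos hx1, hvM_le hM1]
          have hA : 0 < |x| ^ a * (1 - Real.log |x|) ^ b := G_pos hax hx1
          have hB : 0 < M ^ a * (1 - Real.log M) ^ b := G_pos hM0 hM1
          have hGd := G_doubling ha0 hb hM0 hx2 hxM hM1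
          rw [← one_div, mul_one_div, div_le_div_iff₀ hA hB]
          nlinarith
        · rw [hvM_gt hM1, mul_one]
          by_cases hx1 : |x| ≤ 1
          · rw [if_pos hx1]
            have hA : 0 < |x| ^ a * (1 - Real.log |x|) ^ b := G_pos hax hx1
            rw [div_le_iff₀ hA]
            have hhalf : (2:ℝ)⁻¹ ≤ |x| := by
              have hM1' : (1:ℝ) < M := lt_of_not_ge hM1
              linarith
            have h2ap : (0:ℝ) < 2 ^ a := Real.rpow_pos_of_pos two_pos a
            have e1 : ((2:ℝ) ^ a)⁻¹ ≤ |x| ^ a := by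
              rw [← Real.inv_rpow (by norm_num : (0:ℝ) ≤ 2)]
              exact Real.rpow_le_rpow (by norm_num) hhalf ha0.le
            have e2 : 1 ≤ (1 - Real.log |x|) ^ b := by
              apply Real.one_le_rpow _ hb.le
              have := Real.log_nonpos (abs_nonneg x) hx1; linarith
            have e3 : ((2:ℝ) ^ a)⁻¹ ≤ |x| ^ a * (1 - Real.log |x|) ^ b := by
              calc ((2:ℝ) ^ a)⁻¹ = ((2:ℝ) ^ a)⁻¹ * 1 := (mul_one _).symm
                _ ≤ |x| ^ a * (1 - Real.log |x|) ^ b :=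
                  mul_le_mul e1 e2 zero_le_one (Real.rpow_nonneg (abs_nonneg x) _)
            calc (1:ℝ) = 2 ^ a * ((2:ℝ) ^ a)⁻¹ := (mul_inv_cancel₀ h2ap.ne').symm
              _ ≤ 2 ^ a * (|x| ^ a * (1 - Real.log |x|) ^ b) :=
                mul_le_mul_of_nonneg_left e3 h2ap.le
          · rw [if_neg hx1]; exact h2a1
      have hvol : volume (Set.Icc c (c + h)) = ENNReal.ofReal h := by
        rw [Real.volume_Icc]; congr 1; ring
      calc (∫⁻ x in Set.Icc c (c + h), ENNReal.ofReal (v x))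
          ≤ ∫⁻ _ in Set.Icc c (c + h), ENNReal.ofReal (2 ^ a * v M) := by
            apply setLIntegral_mono' measurableSet_Icc
            intro x hx
            exact ENNReal.ofReal_le_ofReal (P2 x hx)
        _ = ENNReal.ofReal (2 ^ a * v M) * ENNReal.ofReal h := by
            rw [setLIntegral_const, hvol]
        _ = ENNReal.ofReal (2 ^ a * v M * h) := by
            rw [← ENNReal.ofReal_mul (mul_nonneg h2a0 hvM0)]
        _ ≤ ENNReal.ofReal (C1 * (h * v M)) := by
            apply ENNReal.ofReal_le_ofReal
            have h4 : 0 < 4 / (1 - a) := by positivity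
            have h2aC1 : 2 ^ a ≤ C1 := by simp only [hC1def]; linarith
            calc 2 ^ a * v M * h = 2 ^ a * (h * v M) := by ring
              _ ≤ C1 * (h * v M) :=
                mul_le_mul_of_nonneg_right h2aC1 (mul_nonneg hh.le hvM0)
  -- wrap up
  have hE : ENNReal.ofReal (v M / K) ≤
      essInf (fun x => ENNReal.ofReal (v x)) (volume.restrict (Set.Icc c (c + h))) := by
    refine le_essInf_of_ae_le _ ?_
    have h0 : ∀ᵐ x ∂(volume.restrict (Set.Icc c (c + h))), x ≠ 0 := by
      apply ae_restrict_of_ae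
      rw [ae_iff]
      simp only [ne_eq, not_not, Set.setOf_eq_eq_singleton]
      exact measure_singleton 0
    filter_upwards [h0, ae_restrict_mem measurableSet_Icc] with x hx0 hxI
    apply ENNReal.ofReal_le_ofReal
    have hP := P1 x hx0 (habs x hxI)
    rw [div_le_iff₀ hK0]
    linarith
  have hvol : volume (Set.Icc c (c + h)) = ENNReal.ofReal h := by
    rw [Real.volume_Icc]; congr 1; ring
  simp only [avgI]
  rw [hvol]
  calc (ENNReal.ofReal h)⁻¹ * ∫⁻ x in Set.Icc c (c + h), ENNReal.ofReal (v x)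
      ≤ (ENNReal.ofReal h)⁻¹ * ENNReal.ofReal (C1 * (h * v M)) := mul_le_mul_right key _
    _ = ENNReal.ofReal (C1 * v M) := by
        rw [show C1 * (h * v M) = h * (C1 * v M) by ring, ENNReal.ofReal_mul hh.le,
          ← mul_assoc, ENNReal.inv_mul_cancel
            (ENNReal.ofReal_pos.mpr hh).ne' ENNReal.ofReal_ne_top, one_mul]
    _ = ENNReal.ofReal (C1 * K) * ENNReal.ofReal (v M / K) := by
        rw [← ENNReal.ofReal_mul (mul_nonneg hC10 hK0.le)]
        congr 1
        field_simp
    _ ≤ ENNReal.ofReal (C1 * K) *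
          essInf (fun x => ENNReal.ofReal (v x)) (volume.restrict (Set.Icc c (c + h))) :=
        mul_le_mul_right hE _
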